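/- arXiv:2602.19066 — 4 statements merged into one kernel-verified Lean document; each statement's English description precedes it below -/
import Mathlib

section
/- Let N ≥ 2 and let Q_abs be the absorbing diffusion matrix. Then Q_abs satisfies Q_abs² = −Q_abs, and for every real number c, Matrix.exp (c • Q_abs) = 1 + (1 − exp(−c)) • Q_abs, where 1 denotes the N×N identity matrix. Equivalently, the (i,j) entry of Matrix.exp (c • Q_abs) equals exp(−c) if i = j ≠ m, equals 1 if i = j = m, equals 1 − exp(−c) if i = m and j ≠ m, and equals 0 otherwise. -/
open Real Matrix

def Qabs (N : ℕ) (m : Fin N) : Matrix (Fin N) (Fin N) ℝ :=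
  Matrix.of fun i j =>
    if i = j ∧ i ≠ m then -1
    else if i = m ∧ j ≠ m then 1
    else 0

lemma Qabs_sq (N : ℕ) (m : Fin N) : Qabs N m ^ 2 = -Qabs N m := by
  ext i j
  rw [pow_two, Matrix.mul_apply, Matrix.neg_apply]
  by_cases him : i = m
  · by_cases hjm : j = m
    · simp [Qabs, him, hjm]
    · rw [Finset.sum_eq_single j]
      · simp [Qabs, him, hjm]
      · intro k _ hk
        by_cases hkm : k = m <;>
          simp [Qabs, him, hjm, hk, hkm, Ne.symm hk]
      · simp
  · rw [Finset.sum_eq_single i]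
    · by_cases hij : i = j <;> simp [Qabs, him, hij]
    · intro k _ hk
      simp [Qabs, him, Ne.symm hk]
    · simp

lemma exp_smul_idem {N : ℕ} (A : Matrix (Fin N) (Fin N) ℝ) (hA : A * A = A) (t : ℝ) :
    NormedSpace.exp (t • A) = 1 + (Real.exp t - 1) • A := by
  letI : SeminormedRing (Matrix (Fin N) (Fin N) ℝ) := Matrix.linftyOpSemiNormedRing
  letI : NormedRing (Matrix (Fin N) (Fin N) ℝ) := Matrix.linftyOpNormedRing
  letI : NormedAlgebra ℝ (Matrix (Fin N) (Fin N) ℝ) := Matrix.linftyOpNormedAlgebra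
  have hpow : ∀ n : ℕ, A ^ (n + 1) = A := by
    intro n
    induction n with
    | zero => simp
    | succ k ih => rw [pow_succ, ih, hA]
  have hs : Summable (fun n : ℕ => ((n.factorial : ℝ)⁻¹) • (t • A) ^ n) :=
    NormedSpace.expSeries_summable' (𝕂 := ℝ) (t • A)
  have hsc : Summable (fun n : ℕ => t ^ (n + 1) / ((n + 1).factorial : ℝ)) := by
    have := Real.summable_pow_div_factorial t
    exact this.comp_injective Nat.succ_injective
  simp only [NormedSpace.exp_eq_tsum ℝ]
  rw [Summable.tsum_eq_zero_add hs]
  have hterm : ∀ n : ℕ, (((n + 1).factorial : ℝ)⁻¹) • (t • A) ^ (n + 1)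
      = (t ^ (n + 1) / ((n + 1).factorial : ℝ)) • A := by
    intro n
    rw [smul_pow, hpow, smul_smul]
    congr 1
    field_simp
  simp only [hterm, pow_zero, Nat.factorial_zero, Nat.cast_one, inv_one, one_smul]
  rw [Summable.tsum_smul_const hsc]
  have hexp : Real.exp t = ∑' n : ℕ, t ^ n / (n.factorial : ℝ) := by
    rw [Real.exp_eq_exp_ℝ]
    simp only [NormedSpace.exp_eq_tsum_div]
  have hsc' : Summable (fun n : ℕ => t ^ n / (n.factorial : ℝ)) := Real.summable_pow_div_factorial t
  rw [Summable.tsum_eq_zero_add hsc'] at hexp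
  simp only [pow_zero, Nat.factorial_zero, Nat.cast_one] at hexp
  have h2 : Real.exp t - 1 = ∑' n : ℕ, t ^ (n + 1) / ((n + 1).factorial : ℝ) := by
    rw [hexp]; ring
  rw [h2]

/-- `Q_abs² = −Q_abs`, and the matrix exponential of `c • Q_abs` equals
`1 + (1 − exp(−c)) • Q_abs`; entrywise, it equals `exp(−c)` if `i = j ≠ m`, `1` if `i = j = m`,
`1 − exp(−c)` if `i = m ≠ j`, and `0` otherwise. -/
theorem exp_absorbing (N : ℕ) (hN : 2 ≤ N) (m : Fin N) (hm : (m : ℕ) = N - 1) :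
    Qabs N m ^ 2 = -Qabs N m ∧
    ∀ c : ℝ,
      NormedSpace.exp (c • Qabs N m) = 1 + (1 - Real.exp (-c)) • Qabs N m ∧
      ∀ i j : Fin N,
        NormedSpace.exp (c • Qabs N m) i j =
          if i = j then (if i = m then 1 else Real.exp (-c))
          else if i = m then 1 - Real.exp (-c)
          else 0 := by
  have hsq := Qabs_sq N m
  refine ⟨hsq, fun c => ?_⟩
  have hP : (-Qabs N m) * (-Qabs N m) = -Qabs N m := by
    rw [neg_mul_neg, ← pow_two, hsq]
  have key : NormedSpace.exp (c • Qabs N m) = 1 + (1 - Real.exp (-c)) • Qabs N m := by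
    have h1 : c • Qabs N m = (-c) • (-Qabs N m) := by rw [smul_neg, neg_smul, neg_neg]
    rw [h1, exp_smul_idem _ hP, smul_neg, ← neg_smul]
    congr 1
    ring_nf
  refine ⟨key, fun i j => ?_⟩
  rw [key]
  simp only [Matrix.add_apply, Matrix.one_apply, Matrix.smul_apply, Qabs, Matrix.of_apply,
    smul_eq_mul]
  by_cases hij : i = j <;> by_cases him : i = m
  · have hjm : j = m := hij.symm.trans him
    simp [hij, him, hjm]
  · have hjm : j ≠ m := fun h => him (hij.trans h)
    simp [hij, him, hjm]
  · have hjm : j ≠ m := fun h => hij (him.trans h.symm)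
    simp [hij, him, hjm, Ne.symm hjm]
  · simp [hij, him]
end

section
/- Let N ≥ 2, let Q_abs be the absorbing diffusion matrix with mask index m, and let e_m ∈ ℝ^N denote the one-hot vector with a 1 at index m. Then for every x in the probability simplex of ℝ^N, the vector Matrix.exp (c • Q_abs) *ᵥ x tends to e_m as c → ∞ (Filter.Tendsto along atTop). -/
open Matrix Filter
open scoped Nat

lemma Qsq (N : ℕ) (m : Fin N) : Qabs N m * Qabs N m = -(Qabs N m) := by
  ext i j
  simp only [Matrix.mul_apply, Qabs, Matrix.of_apply, Matrix.neg_apply]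
  by_cases hi : i = m
  · by_cases hj : j = m
    · rw [Finset.sum_eq_zero]
      · simp [hi, hj]
      · intro k _
        by_cases hk : k = m <;> simp [hi, hj, hk]
    · rw [Finset.sum_eq_single j]
      · simp [hi, hj]
      · intro k _ hk
        by_cases hkm : k = m <;> simp [hi, hj, hk, hkm]
      · simp
  · rw [Finset.sum_eq_single i]
    · by_cases hj : i = j <;> simp [hi, hj]
    · intro k _ hk
      simp [hi, Ne.symm hk]
    · simp

lemma Qpow (N : ℕ) (m : Fin N) (n : ℕ) :
    Qabs N m ^ (n + 1) = ((-1 : ℝ)) ^ n • Qabs N m := by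
  induction n with
  | zero => simp
  | succ n ih =>
    rw [pow_succ, ih, Matrix.smul_mul, Qsq, smul_neg, ← neg_smul]
    congr 1
    ring

lemma exp_cQ (N : ℕ) (m : Fin N) (c : ℝ) :
    NormedSpace.exp (c • Qabs N m) = 1 + (1 - Real.exp (-c)) • Qabs N m := by
  letI : SeminormedRing (Matrix (Fin N) (Fin N) ℝ) := Matrix.linftyOpSemiNormedRing
  letI : NormedRing (Matrix (Fin N) (Fin N) ℝ) := Matrix.linftyOpNormedRing
  letI : NormedAlgebra ℝ (Matrix (Fin N) (Fin N) ℝ) := Matrix.linftyOpNormedAlgebra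
  rw [NormedSpace.exp_eq_tsum (𝕂 := ℝ)]
  set Q := Qabs N m with hQ
  set s : ℕ → ℝ := fun n => (if n = 0 then (1 : ℝ) else 0) - ((n ! : ℝ))⁻¹ * (-c) ^ n with hs
  have hse : Summable fun n : ℕ => ((n ! : ℝ))⁻¹ * (-c) ^ n := by
    simpa [div_eq_inv_mul] using Real.summable_pow_div_factorial (-c)
  have hgs : Summable fun n : ℕ => (if n = 0 then (1 : ℝ) else 0) :=
    summable_of_ne_finset_zero (s := {0}) (by intro n hn; simp at hn; simp [hn])
  have hssum : Summable s := hgs.sub hse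
  have hes : ∑' n : ℕ, ((n ! : ℝ))⁻¹ * (-c) ^ n = Real.exp (-c) := by
    rw [Real.exp_eq_exp_ℝ, NormedSpace.exp_eq_tsum (𝕂 := ℝ)]
    simp [smul_eq_mul]
  have hstsum : ∑' n, s n = 1 - Real.exp (-c) := by
    rw [hs, Summable.tsum_sub hgs hse, hes, tsum_ite_eq]
  have hpt : ∀ n : ℕ, ((n ! : ℝ))⁻¹ • (c • Q) ^ n
      = (if n = 0 then (1 : Matrix (Fin N) (Fin N) ℝ) else 0) + s n • Q := by
    intro n
    cases n with
    | zero => simp [hs]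
    | succ k =>
      rw [smul_pow, hQ, Qpow N m k]
      simp only [hs, Nat.succ_ne_zero, if_neg, reduceIte]
      rw [zero_add, smul_smul, smul_smul]
      congr 1
      rw [neg_pow]
      ring
  have hg : Summable fun n : ℕ => (if n = 0 then (1 : Matrix (Fin N) (Fin N) ℝ) else 0) :=
    summable_of_ne_finset_zero (s := {0}) (by intro n hn; simp at hn; simp [hn])
  have hh : Summable fun n : ℕ => s n • Q := hssum.smul_const Q
  calc (∑' n : ℕ, ((n ! : ℝ))⁻¹ • (c • Q) ^ n)
      = ∑' n : ℕ, ((if n = 0 then (1 : Matrix (Fin N) (Fin N) ℝ) else 0) + s n • Q) :=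
        tsum_congr hpt
    _ = (∑' n : ℕ, (if n = 0 then (1 : Matrix (Fin N) (Fin N) ℝ) else 0))
        + ∑' n : ℕ, s n • Q := Summable.tsum_add hg hh
    _ = 1 + (1 - Real.exp (-c)) • Q := by
        rw [tsum_ite_eq, Summable.tsum_smul_const hssum, hstsum]

/-- For every `x` in the probability simplex, `exp (c • Q_abs) *ᵥ x` tends to the one-hot
vector at the mask index `m` as `c → ∞`: the absorbing forward process converges to the delta
distribution on the mask token. -/
theorem absorbing_limit (N : ℕ) (hN : 2 ≤ N) (m : Fin N) (hm : (m : ℕ) = N - 1)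
    (x : Fin N → ℝ) (hx : ∀ i, 0 ≤ x i) (hsum : ∑ i, x i = 1) :
    Tendsto (fun c : ℝ => NormedSpace.exp (c • Qabs N m) *ᵥ x) atTop
      (nhds (Pi.single m 1)) := by
  have hQx : Qabs N m *ᵥ x = fun i => if i = m then 1 - x m else -x i := by
    funext i
    simp only [Matrix.mulVec, dotProduct, Qabs, Matrix.of_apply]
    by_cases hi : i = m
    · subst hi
      have : ∀ j : Fin N, (if i = j ∧ i ≠ i then (-1:ℝ) else if i = i ∧ j ≠ i then 1 else 0) * x j
          = x j - (if j = i then x j else 0) := by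
        intro j
        by_cases hj : j = i <;> simp [hj, Ne.symm, eq_comm]
      rw [if_pos rfl, Finset.sum_congr rfl fun j _ => this j, Finset.sum_sub_distrib, hsum,
        Finset.sum_ite_eq' Finset.univ i x, if_pos (Finset.mem_univ i)]
    · simp only [if_neg hi]
      rw [Finset.sum_eq_single i]
      · simp [hi]
      · intro k _ hk
        simp [hi, Ne.symm hk]
      · simp
  have hlim : Tendsto (fun c : ℝ => (1 : ℝ) - Real.exp (-c)) atTop (nhds 1) := by
    have h0 : Tendsto (fun c : ℝ => Real.exp (-c)) atTop (nhds 0) :=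
      Real.tendsto_exp_neg_atTop_nhds_zero
    simpa using (tendsto_const_nhds (x := (1 : ℝ)) (f := atTop (α := ℝ))).sub h0
  have key : ∀ c : ℝ, NormedSpace.exp (c • Qabs N m) *ᵥ x
      = x + (1 - Real.exp (-c)) • (Qabs N m *ᵥ x) := by
    intro c
    rw [exp_cQ, Matrix.add_mulVec, Matrix.one_mulVec, Matrix.smul_mulVec]
  have hfinal : x + (1 : ℝ) • (Qabs N m *ᵥ x) = Pi.single m 1 := by
    rw [one_smul, hQx]
    funext i
    by_cases hi : i = m
    · subst hi; simp
    · simp [hi, Pi.single_eq_of_ne hi]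
  simp only [key]
  have := tendsto_const_nhds (x := x) (f := atTop (α := ℝ)) |>.add
    (hlim.smul_const (Qabs N m *ᵥ x))
  rwa [hfinal] at this
end

section
/- Let N ≥ 1 and let Q_uni = J − N • 1 be the uniform diffusion matrix, where J is the all-ones N×N real matrix and 1 the identity. Then for every x in the probability simplex of ℝ^N, the vector Matrix.exp (c • Q_uni) *ᵥ x tends to the uniform vector (1/N, …, 1/N) as c → ∞ (Filter.Tendsto along atTop). -/
open Matrix Filter

/-- The all-ones `N × N` real matrix. -/
def allOnes (N : ℕ) : Matrix (Fin N) (Fin N) ℝ := Matrix.of fun _ _ => 1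

/-- The uniform diffusion matrix `Q_uni = J − N • 1`. -/
def Quni (N : ℕ) : Matrix (Fin N) (Fin N) ℝ := allOnes N - (N : ℝ) • 1

attribute [local instance] Matrix.linftyOpNormedRing Matrix.linftyOpNormedAlgebra


lemma Quni_sq (N : ℕ) : Quni N * Quni N = (-(N:ℝ)) • Quni N := by
  unfold Quni allOnes
  ext i j
  simp [Matrix.mul_apply, Matrix.sub_apply, Matrix.smul_apply, Matrix.one_apply,
    Finset.sum_ite_eq, mul_comm, sub_mul, mul_sub, Finset.sum_sub_distrib]
  by_cases h : i = j <;> simp [h] <;> ring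

lemma pow_smul_Quni (N : ℕ) (c : ℝ) (n : ℕ) :
    (c • Quni N) ^ (n + 1) = (c ^ (n + 1) * (-(N:ℝ)) ^ n) • Quni N := by
  induction n with
  | zero => simp
  | succ n ih =>
      rw [pow_succ, ih, smul_mul_assoc, mul_smul_comm, Quni_sq]
      rw [smul_smul, smul_smul]
      congr 1
      ring

lemma exp_Quni (N : ℕ) (hN : 1 ≤ N) (c : ℝ) :
    NormedSpace.exp (c • Quni N) =
      1 + ((1 - Real.exp (-((N:ℝ) * c))) / N) • Quni N := by
  have hN0 : (N:ℝ) ≠ 0 := by positivity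
  have hs := NormedSpace.expSeries_summable' (𝕂 := ℝ) (c • Quni N)
  rw [NormedSpace.exp_eq_tsum (𝕂 := ℝ)]
  beta_reduce
  erw [Summable.tsum_eq_zero_add hs]
  simp only [pow_zero, Nat.factorial_zero, Nat.cast_one, inv_one, Nat.cast_ofNat, one_smul]
  congr 1
  have h1 : ∀ n : ℕ, (Nat.factorial (n+1) : ℝ)⁻¹ • (c • Quni N) ^ (n + 1)
      = ((-(N:ℝ))⁻¹ * ((-((N:ℝ)*c)) ^ (n+1) / (Nat.factorial (n+1) : ℝ))) • Quni N := by
    intro n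
    rw [pow_smul_Quni, smul_smul]
    congr 1
    have : (-((N:ℝ)*c)) ^ (n+1) = (-(N:ℝ))^(n+1) * c^(n+1) := by
      rw [← neg_mul, mul_pow]
    rw [this, pow_succ]
    field_simp
    ring
  simp only [h1]
  have hsum2 : Summable fun n : ℕ => ((-(N:ℝ))⁻¹ * ((-((N:ℝ)*c)) ^ (n+1) / (Nat.factorial (n+1) : ℝ))) := by
    apply Summable.mul_left
    have := (Real.summable_pow_div_factorial (-((N:ℝ)*c)))
    exact (summable_nat_add_iff 1).mpr this
  rw [Summable.tsum_smul_const hsum2]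
  congr 1
  have hexp : Real.exp (-((N:ℝ)*c)) = ∑' n : ℕ, (-((N:ℝ)*c))^n / (Nat.factorial n : ℝ) := by
    rw [Real.exp_eq_exp_ℝ, NormedSpace.exp_eq_tsum_div]
  have hsum3 := Real.summable_pow_div_factorial (-((N:ℝ)*c))
  rw [tsum_mul_left]
  have : ∑' n : ℕ, (-((N:ℝ)*c))^(n+1) / (Nat.factorial (n+1) : ℝ) = Real.exp (-((N:ℝ)*c)) - 1 := by
    rw [hexp, Summable.tsum_eq_zero_add hsum3]
    simp
  rw [this]
  field_simp
  linear_combination (0:ℝ) * mul_inv_cancel₀ hN0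

/-- For every `x` in the probability simplex, `exp (c • Q_uni) *ᵥ x` tends to the uniform
vector `(1/N, …, 1/N)` as `c → ∞`: the uniform forward process converges to the uniform
distribution over the `N` categories. -/
theorem uniform_limit (N : ℕ) (hN : 1 ≤ N)
    (x : Fin N → ℝ) (hx : ∀ i, 0 ≤ x i) (hsum : ∑ i, x i = 1) :
    Tendsto (fun c : ℝ => NormedSpace.exp (c • Quni N) *ᵥ x) atTop
      (nhds (fun _ : Fin N => (1 : ℝ) / N)) := by
  have hN0 : (0:ℝ) < N := by positivity
  have hQx : Quni N *ᵥ x = (fun _ => 1) - (N:ℝ) • x := by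
    unfold Quni allOnes
    ext i
    simp [Matrix.mulVec, dotProduct, Matrix.sub_apply, Matrix.smul_apply,
      Matrix.one_apply, mul_sub, mul_one, mul_ite, mul_zero, Finset.sum_sub_distrib, hsum,
      Finset.sum_ite_eq, mul_comm]
  have key : ∀ c : ℝ, NormedSpace.exp (c • Quni N) *ᵥ x =
      fun i => Real.exp (-((N:ℝ)*c)) * x i + (1 - Real.exp (-((N:ℝ)*c))) / N := by
    intro c
    rw [exp_Quni N hN c, Matrix.add_mulVec, Matrix.one_mulVec, Matrix.smul_mulVec, hQx]
    ext i
    simp only [Pi.add_apply, Pi.smul_apply, Pi.sub_apply, Pi.one_apply, smul_eq_mul]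
    field_simp
    ring
  simp only [key]
  rw [tendsto_pi_nhds]
  intro i
  have h0 : Tendsto (fun c : ℝ => Real.exp (-((N:ℝ)*c))) atTop (nhds 0) := by
    apply Real.tendsto_exp_atBot.comp
    apply Filter.tendsto_neg_atBot_iff.mpr
    exact Tendsto.const_mul_atTop hN0 tendsto_id
  have h1 : Tendsto (fun c : ℝ => Real.exp (-((N:ℝ)*c)) * x i
      + (1 - Real.exp (-((N:ℝ)*c))) / N) atTop (nhds (0 * x i + (1 - 0) / N)) :=
    (h0.mul_const _).add ((tendsto_const_nhds.sub h0).div_const _)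
  simpa using h1
end

section
/- Let V and W be finite types, let p and q be PMFs on V, and let k be a Markov kernel from V to W with k v w > 0 for all v, w. Suppose that the posteriors of p and q coincide: for every w ∈ W and every v ∈ V, p(v)·k v w / (∑_{v'} p(v')·k v' w) = q(v)·k v w / (∑_{v'} q(v')·k v' w). Then p = q. -/
open Finset

/-- A probability mass function on a finite type: nonnegative and summing to 1. -/
def IsPMF {X : Type*} [Fintype X] (p : X → ℝ) : Prop :=
  (∀ x, 0 ≤ p x) ∧ ∑ x, p x = 1

/-- A Markov kernel from `V` to `W`: each `k v` is a PMF on `W`. -/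
def IsMarkovKernel {V W : Type*} [Fintype W] (k : V → W → ℝ) : Prop :=
  ∀ v, IsPMF (k v)

/-- Identifiability through a strictly positive kernel: if two PMFs `p` and `q` induce the
same posteriors under a Markov kernel `k` with `k v w > 0` for all `v, w`, then `p = q`. -/
theorem posterior_identifiability {V W : Type*} [Fintype V] [Fintype W]
    (p q : V → ℝ) (hp : IsPMF p) (hq : IsPMF q)
    (k : V → W → ℝ) (hk : IsMarkovKernel k) (hkpos : ∀ v w, 0 < k v w)
    (hpost : ∀ w : W, ∀ v : V,
      p v * k v w / (∑ v', p v' * k v' w) = q v * k v w / (∑ v', q v' * k v' w)) :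
    p = q := by
  -- V is nonempty since ∑ p = 1
  have hVne : Nonempty V := by
    by_contra h
    rw [not_nonempty_iff] at h
    have := hp.2
    simp [Finset.sum_of_isEmpty] at this
  obtain ⟨v0⟩ := hVne
  -- W is nonempty since ∑ k v0 = 1
  have hWne : Nonempty W := by
    by_contra h
    rw [not_nonempty_iff] at h
    have := (hk v0).2
    simp [Finset.sum_of_isEmpty] at this
  obtain ⟨w0⟩ := hWne
  -- positivity of the marginals
  have hex : ∃ v ∈ Finset.univ (α := V), 0 < p v := by
    by_contra h
    push_neg at h
    have : ∑ v, p v ≤ 0 := Finset.sum_nonpos (fun v _ => h v (Finset.mem_univ v))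
    linarith [hp.2]
  have hZp : 0 < ∑ v', p v' * k v' w0 := by
    obtain ⟨v, _, hv⟩ := hex
    exact Finset.sum_pos' (fun v' _ => mul_nonneg (hp.1 v') (hkpos v' w0).le)
      ⟨v, Finset.mem_univ v, mul_pos hv (hkpos v w0)⟩
  have hexq : ∃ v ∈ Finset.univ (α := V), 0 < q v := by
    by_contra h
    push_neg at h
    have : ∑ v, q v ≤ 0 := Finset.sum_nonpos (fun v _ => h v (Finset.mem_univ v))
    linarith [hq.2]
  have hZq : 0 < ∑ v', q v' * k v' w0 := by
    obtain ⟨v, _, hv⟩ := hexq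
    exact Finset.sum_pos' (fun v' _ => mul_nonneg (hq.1 v') (hkpos v' w0).le)
      ⟨v, Finset.mem_univ v, mul_pos hv (hkpos v w0)⟩
  set Zp := ∑ v', p v' * k v' w0 with hZpdef
  set Zq := ∑ v', q v' * k v' w0 with hZqdef
  -- from the posterior equality: p v * Zq = q v * Zp for all v
  have key : ∀ v, p v * Zq = q v * Zp := by
    intro v
    have h := hpost w0 v
    have hk0 := hkpos v w0
    field_simp at h
    have h2 : p v / Zp = q v / Zq := h
    rw [div_eq_div_iff (ne_of_gt hZp) (ne_of_gt hZq)] at h2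
    linarith [h2]
  -- summing gives Zq = Zp
  have hsum : Zq = Zp := by
    have := Finset.sum_congr rfl (fun v (_ : v ∈ Finset.univ) => key v)
    rw [← Finset.sum_mul, ← Finset.sum_mul, hp.2, hq.2, one_mul, one_mul] at this
    exact this
  funext v
  have := key v
  rw [hsum] at this
  exact mul_right_cancel₀ (ne_of_gt hZp) this
end
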